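/- Every cone K in ℝ^m (i.e., every closed set with K ∩ (−K) = {0} that is stable under nonnegative linear combinations) is regular: every sequence {x^n} in ℝ^m that is ≤_K-increasing and ≤_K-bounded from above is convergent. -/

import Mathlib

/-- Every cone `K` in `ℝ^m` (a closed set with `K ∩ (−K) = {0}` stable under
nonnegative linear combinations) is regular: every sequence that is
`≤_K`-increasing and `≤_K`-bounded from above converges. -/
theorem stmt6 (m : ℕ) (K : Set (EuclideanSpace ℝ (Fin m)))
    (hKclosed : IsClosed K) (hKpointed : K ∩ (-K) = {0})
    (hKcone : ∀ lam mu : ℝ, 0 ≤ lam → 0 ≤ mu →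
      ∀ x ∈ K, ∀ y ∈ K, lam • x + mu • y ∈ K)
    (x : ℕ → EuclideanSpace ℝ (Fin m))
    (hinc : ∀ n₁ n₂ : ℕ, n₁ ≤ n₂ → x n₂ - x n₁ ∈ K)
    (hbdd : ∃ y, ∀ n, y - x n ∈ K) :
    ∃ l, Filter.Tendsto x Filter.atTop (nhds l) := by
  classical
  obtain ⟨y, hy⟩ := hbdd
  have h0K : (0 : EuclideanSpace ℝ (Fin m)) ∈ K := by
    have := hinc 0 0 le_rfl; simpa using this
  have hsmul : ∀ (c : ℝ), 0 ≤ c → ∀ v ∈ K, c • v ∈ K := by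
    intro c hc v hv
    have := hKcone c 0 hc le_rfl v hv 0 h0K
    simpa using this
  have hpointed : ∀ v, v ∈ K → -v ∈ K → v = 0 := by
    intro v hv hnv
    have : v ∈ K ∩ (-K) := ⟨hv, by rwa [Set.mem_neg]⟩
    rw [hKpointed] at this
    simpa using this
  -- Step 1: the sequence is bounded in norm.
  have hbound : ∃ R : ℝ, ∀ n, ‖x n - x 0‖ ≤ R := by
    by_contra h
    push_neg at h
    choose g hg using fun j : ℕ => h (j : ℝ)
    set z : ℕ → EuclideanSpace ℝ (Fin m) := fun j => x (g j) - x 0 with hzdef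
    have hzK : ∀ j, z j ∈ K := fun j => hinc 0 (g j) (Nat.zero_le _)
    have hznorm : ∀ j : ℕ, (j : ℝ) < ‖z j‖ := fun j => hg j
    have hzpos : ∀ j, (0 : ℝ) < ‖z j‖ :=
      fun j => lt_of_le_of_lt (Nat.cast_nonneg j) (hznorm j)
    set w : ℕ → EuclideanSpace ℝ (Fin m) := fun j => ‖z j‖⁻¹ • z j with hwdef
    have hwsph : ∀ j, w j ∈ Metric.sphere (0 : EuclideanSpace ℝ (Fin m)) 1 := by
      intro j
      rw [mem_sphere_zero_iff_norm, hwdef]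
      simp only [norm_smul, norm_inv, norm_norm]
      exact inv_mul_cancel₀ (hzpos j).ne'
    obtain ⟨c, hcs, φ, hφ, hwc⟩ := (isCompact_sphere (0 : EuclideanSpace ℝ (Fin m)) 1).tendsto_subseq hwsph
    have hcK : c ∈ K :=
      hKclosed.mem_of_tendsto hwc
        (Filter.Eventually.of_forall fun j =>
          hsmul _ (inv_nonneg.mpr (norm_nonneg _)) _ (hzK (φ j)))
    -- norms along the subsequence tend to infinity
    have hnormTop : Filter.Tendsto (fun j => ‖z (φ j)‖) Filter.atTop Filter.atTop := by
      apply Filter.tendsto_atTop_mono (fun j => (hznorm (φ j)).le)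
      exact tendsto_natCast_atTop_atTop.comp hφ.tendsto_atTop
    have hinvzero : Filter.Tendsto (fun j => ‖z (φ j)‖⁻¹) Filter.atTop (nhds 0) :=
      tendsto_inv_atTop_zero.comp hnormTop
    -- the rescaled upper bounds converge to -c
    have hvK : ∀ j, ‖z (φ j)‖⁻¹ • (y - x 0) - w (φ j) ∈ K := by
      intro j
      have hmem : (y - x 0) - z (φ j) ∈ K := by
        have := hy (g (φ j))
        have heq : (y - x 0) - z (φ j) = y - x (g (φ j)) := by
          rw [hzdef]; beta_reduce; abel
        rw [heq]; exact this
      have := hsmul _ (inv_nonneg.mpr (norm_nonneg (z (φ j)))) _ hmem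
      rwa [smul_sub] at this
    have hvlim : Filter.Tendsto
        (fun j => ‖z (φ j)‖⁻¹ • (y - x 0) - w (φ j)) Filter.atTop (nhds (-c)) := by
      have h1 : Filter.Tendsto (fun j => ‖z (φ j)‖⁻¹ • (y - x 0))
          Filter.atTop (nhds ((0 : ℝ) • (y - x 0))) := hinvzero.smul_const _
      rw [zero_smul] at h1
      have := h1.sub hwc
      rwa [zero_sub] at this
    have hncK : -c ∈ K := hKclosed.mem_of_tendsto hvlim (Filter.Eventually.of_forall hvK)
    have : c = 0 := hpointed c hcK hncK
    have hc1 : ‖c‖ = 1 := mem_sphere_zero_iff_norm.mp hcs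
    rw [this] at hc1; simp at hc1
  obtain ⟨R, hR⟩ := hbound
  have hmem : ∀ n, x n ∈ Metric.closedBall (0 : EuclideanSpace ℝ (Fin m)) (R + ‖x 0‖) := by
    intro n
    rw [Metric.mem_closedBall, dist_zero_right]
    calc ‖x n‖ = ‖(x n - x 0) + x 0‖ := by congr 1; abel
    _ ≤ ‖x n - x 0‖ + ‖x 0‖ := norm_add_le _ _
    _ ≤ R + ‖x 0‖ := by linarith [hR n]
  -- Step 2: any two subsequential limits (along sequences tending to infinity) coincide.
  have hkey : ∀ (l₁ l₂ : EuclideanSpace ℝ (Fin m)) (φ ψ : ℕ → ℕ),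
      Filter.Tendsto φ Filter.atTop Filter.atTop →
      Filter.Tendsto ψ Filter.atTop Filter.atTop →
      Filter.Tendsto (fun j => x (φ j)) Filter.atTop (nhds l₁) →
      Filter.Tendsto (fun j => x (ψ j)) Filter.atTop (nhds l₂) →
      l₂ - l₁ ∈ K := by
    intro l₁ l₂ φ ψ hφ hψ hφlim hψlim
    have step1 : ∀ i, l₂ - x (φ i) ∈ K := by
      intro i
      refine hKclosed.mem_of_tendsto (hψlim.sub (tendsto_const_nhds
        (x := x (φ i)))) ?_
      filter_upwards [hψ.eventually_ge_atTop (φ i)] with j hj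
      exact hinc _ _ hj
    exact hKclosed.mem_of_tendsto ((tendsto_const_nhds (x := l₂)).sub hφlim)
      (Filter.Eventually.of_forall step1)
  have huniq : ∀ (l₁ l₂ : EuclideanSpace ℝ (Fin m)) (φ ψ : ℕ → ℕ),
      Filter.Tendsto φ Filter.atTop Filter.atTop →
      Filter.Tendsto ψ Filter.atTop Filter.atTop →
      Filter.Tendsto (fun j => x (φ j)) Filter.atTop (nhds l₁) →
      Filter.Tendsto (fun j => x (ψ j)) Filter.atTop (nhds l₂) →
      l₁ = l₂ := by
    intro l₁ l₂ φ ψ hφ hψ hφlim hψlim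
    have h1 : l₂ - l₁ ∈ K := hkey l₁ l₂ φ ψ hφ hψ hφlim hψlim
    have h2 : l₁ - l₂ ∈ K := hkey l₂ l₁ ψ φ hψ hφ hψlim hφlim
    have := hpointed (l₂ - l₁) h1 (by rwa [neg_sub])
    have := sub_eq_zero.mp this
    exact this.symm
  -- Step 3: extract a convergent subsequence and upgrade to full convergence.
  obtain ⟨l, _, φ, hφ, hxφ⟩ :=
    (isCompact_closedBall (0 : EuclideanSpace ℝ (Fin m)) (R + ‖x 0‖)).tendsto_subseq hmem
  refine ⟨l, ?_⟩
  apply Filter.tendsto_of_subseq_tendsto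
  intro ns hns
  obtain ⟨l', _, ms, hms, hlim'⟩ :=
    (isCompact_closedBall (0 : EuclideanSpace ℝ (Fin m)) (R + ‖x 0‖)).tendsto_subseq
      (x := fun j => x (ns j)) (fun j => hmem (ns j))
  refine ⟨ms, ?_⟩
  have hll' : l = l' :=
    huniq l l' φ (ns ∘ ms) hφ.tendsto_atTop (hns.comp hms.tendsto_atTop) hxφ hlim'
  rw [hll']
  exact hlim'
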